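/- arXiv:1504.03033 — 5 statements merged into one kernel-verified Lean document; each statement's English description precedes it below -/
import Mathlib

section
/- For the linear graph L_n with n = 2k or n = 2k−1, and 1 ≤ i < j ≤ k, there exists ε > 0 such that for all λ ∈ (0, ε), I_i(λ) < I_j(λ). -/
/-- Importance of vertex `j` in the linear graph `L_n` under the PWP method. -/
noncomputable def impL (n j : ℕ) (lam : ℝ) : ℝ :=
  (1 / (Real.exp lam - 1)) *
    ((∑ i ∈ Finset.Icc 1 (j - 1), lam ^ (j - i) / (Nat.factorial (j - i))) +
     (∑ i ∈ Finset.Icc (j + 1) n, lam ^ (i - j) / (Nat.factorial (i - j))))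

lemma impL_eq (n j : ℕ) (lam : ℝ) (hj : 1 ≤ j) :
    impL n j lam = (1 / (Real.exp lam - 1)) *
      ((∑ m ∈ Finset.Ioc 0 (j - 1), lam ^ m / (Nat.factorial m)) +
       (∑ m ∈ Finset.Ioc 0 (n - j), lam ^ m / (Nat.factorial m))) := by
  unfold impL
  congr 2
  · refine Finset.sum_nbij' (fun i => j - i) (fun m => j - m) ?_ ?_ ?_ ?_ ?_ <;>
      intro a ha <;> simp only [Finset.mem_Icc, Finset.mem_Ioc] at * <;> omega
  · refine Finset.sum_nbij' (fun i => i - j) (fun m => m + j) ?_ ?_ ?_ ?_ ?_ <;>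
      intro a ha <;> simp only [Finset.mem_Icc, Finset.mem_Ioc] at * <;> omega

/-- For small ,  whenever , where  or . -/
theorem stmt4 (n k i j : ℕ) (hk : 2 ≤ k) (hn : n = 2 * k ∨ n = 2 * k - 1)
    (hi : 1 ≤ i) (hij : i < j) (hjk : j ≤ k) :
    ∃ ε > (0:ℝ), ∀ lam : ℝ, 0 < lam → lam < ε → impL n i lam < impL n j lam := by
  have hnij : i + j ≤ n := by omega
  have hji : 1 ≤ j - i := by omega
  refine ⟨min 1 (1 / ((j - i : ℕ) * (Nat.factorial i))), by positivity, ?_⟩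
  intro lam hl hle
  have hl1 : lam < 1 := lt_of_lt_of_le hle (min_le_left _ _)
  have hl2 : lam < 1 / ((j - i : ℕ) * (Nat.factorial i)) :=
    lt_of_lt_of_le hle (min_le_right _ _)
  rw [impL_eq n i lam hi, impL_eq n j lam (by omega)]
  have hexp : (0:ℝ) < 1 / (Real.exp lam - 1) := by
    have h := Real.add_one_le_exp lam
    have : (1:ℝ) < Real.exp lam := by linarith
    exact div_pos one_pos (by linarith)
  apply mul_lt_mul_of_pos_left _ hexp
  set T : ℕ → ℝ := fun m => lam ^ m / (Nat.factorial m) with hT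
  have h1 : (∑ m ∈ Finset.Ioc 0 (i - 1), T m) + (∑ m ∈ Finset.Ioc (i-1) (j-1), T m)
      = ∑ m ∈ Finset.Ioc 0 (j - 1), T m :=
    Finset.sum_Ioc_consecutive _ (by omega) (by omega)
  have h2 : (∑ m ∈ Finset.Ioc 0 (n - j), T m) + (∑ m ∈ Finset.Ioc (n-j) (n-i), T m)
      = ∑ m ∈ Finset.Ioc 0 (n - i), T m :=
    Finset.sum_Ioc_consecutive _ (by omega) (by omega)
  rw [← h1, ← h2]
  have key : (∑ m ∈ Finset.Ioc (n-j) (n-i), T m) < (∑ m ∈ Finset.Ioc (i-1) (j-1), T m) := by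
    have hub : (∑ m ∈ Finset.Ioc (n-j) (n-i), T m)
        ≤ (j - i : ℕ) * lam ^ (n - j + 1) := by
      calc (∑ m ∈ Finset.Ioc (n-j) (n-i), T m)
          ≤ ∑ m ∈ Finset.Ioc (n-j) (n-i), lam ^ (n - j + 1) := by
            apply Finset.sum_le_sum
            intro m hm
            simp only [Finset.mem_Ioc] at hm
            have h1 : T m ≤ lam ^ m := by
              rw [hT]
              apply div_le_self (by positivity)
              exact_mod_cast Nat.one_le_iff_ne_zero.mpr (Nat.factorial_ne_zero m)
            have h2 : lam ^ m ≤ lam ^ (n - j + 1) :=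
              pow_le_pow_of_le_one hl.le hl1.le (by omega)
            linarith
        _ = (j - i : ℕ) * lam ^ (n - j + 1) := by
            rw [Finset.sum_const, Nat.card_Ioc, nsmul_eq_mul]
            congr 2
            omega
    have hlb : T i ≤ ∑ m ∈ Finset.Ioc (i-1) (j-1), T m := by
      apply Finset.single_le_sum (f := T)
      · intro m _; rw [hT]; positivity
      · simp only [Finset.mem_Ioc]; omega
    have hmain : (j - i : ℕ) * lam ^ (n - j + 1) < T i := by
      have hd : n - j + 1 = i + (n - j + 1 - i) := by omega
      have hd1 : 1 ≤ n - j + 1 - i := by omega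
      have hpd : lam ^ (n - j + 1 - i) ≤ lam :=
        calc lam ^ (n - j + 1 - i) ≤ lam ^ 1 := pow_le_pow_of_le_one hl.le hl1.le hd1
          _ = lam := pow_one lam
      have hfac : (0:ℝ) < (Nat.factorial i : ℝ) := by
        exact_mod_cast (Nat.factorial_pos i)
      have hji0 : (0:ℝ) < ((j - i : ℕ) : ℝ) := by exact_mod_cast hji
      have hlam2 : ((j - i : ℕ) : ℝ) * lam < 1 / (Nat.factorial i) := by
        rw [lt_div_iff₀ hfac]
        calc ((j - i : ℕ) : ℝ) * lam * (Nat.factorial i)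
            = lam * (((j - i : ℕ) : ℝ) * (Nat.factorial i)) := by ring
          _ < 1 := (lt_div_iff₀ (by positivity)).mp hl2
      have hpw : lam ^ (n - j + 1) = lam ^ i * lam ^ (n - j + 1 - i) := by
        rw [← pow_add, Nat.add_sub_cancel' (by omega : i ≤ n - j + 1)]
      calc ((j - i : ℕ) : ℝ) * lam ^ (n - j + 1)
          = lam ^ i * (((j - i : ℕ) : ℝ) * lam ^ (n - j + 1 - i)) := by
            rw [hpw]; ring
        _ ≤ lam ^ i * (((j - i : ℕ) : ℝ) * lam) := by
            apply mul_le_mul_of_nonneg_left _ (by positivity)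
            exact mul_le_mul_of_nonneg_left hpd (by positivity)
        _ < lam ^ i * (1 / (Nat.factorial i)) :=
            mul_lt_mul_of_pos_left hlam2 (by positivity)
        _ = T i := by rw [hT]; ring
    linarith
  linarith
end

section
/- For positive integers n and i with n − 2i − 2 ≥ 0 (i.e. i + 1 < n − i − 1), the inequality ((n−i)(i+1))^{n−2i−2} < ((n−i−1)!/(i+1)!)² holds; equivalently ((n−i)!/i!)^{1/(n−2i)} < ((n−i−1)!/(i+1)!)^{1/(n−2i−2)}. -/
private lemma key : ∀ b a : ℕ, a < b →
    ((b + 1) * a) ^ (b - a) * (Nat.factorial a) ^ 2 < (Nat.factorial b) ^ 2 := by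
  intro b
  induction b using Nat.strong_induction_on with
  | _ b IH =>
    intro a hab
    rcases lt_or_ge b (a + 3) with hb | hb
    · have : b = a + 1 ∨ b = a + 2 := by omega
      rcases this with rfl | rfl
      · have h2 : a + 1 - a = 1 := by omega
        rw [h2, pow_one, Nat.factorial_succ, mul_pow]
        have : (a + 1 + 1) * a < (a + 1) ^ 2 := by nlinarith
        exact (Nat.mul_lt_mul_right (pow_pos a.factorial_pos 2)).mpr this
      · have h2 : a + 2 - a = 2 := by omega
        have hf : Nat.factorial (a + 2) = (a + 2) * (a + 1) * Nat.factorial a := by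
          rw [Nat.factorial_succ, Nat.factorial_succ]; ring
        rw [h2, hf]
        rw [show ((a + 2) * (a + 1) * Nat.factorial a) ^ 2
            = ((a + 2) * (a + 1)) ^ 2 * Nat.factorial a ^ 2 by ring]
        have : ((a + 2 + 1) * a) ^ 2 < ((a + 2) * (a + 1)) ^ 2 := by
          apply Nat.pow_lt_pow_left _ (by norm_num)
          nlinarith
        exact (Nat.mul_lt_mul_right (pow_pos a.factorial_pos 2)).mpr this
    · have hIH := IH (b - 1) (by omega) (a + 1) (by omega)
      have e1 : b - 1 - (a + 1) = b - a - 2 := by omega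
      have e2 : b - 1 + 1 = b := by omega
      rw [e1, e2] at hIH
      obtain ⟨m, hm⟩ : ∃ m, b - a = m + 2 := ⟨b - a - 2, by omega⟩
      have hm2 : b - a - 2 = m := by omega
      rw [hm2] at hIH
      calc ((b + 1) * a) ^ (b - a) * (Nat.factorial a) ^ 2
          ≤ (b * (a + 1)) ^ (b - a) * (Nat.factorial a) ^ 2 := by
            apply Nat.mul_le_mul_right
            apply Nat.pow_le_pow_left
            nlinarith
        _ = b ^ 2 * ((b * (a + 1)) ^ m * (Nat.factorial (a + 1)) ^ 2) := by
            rw [hm, pow_add, Nat.factorial_succ, mul_pow, mul_pow]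
            ring
        _ < b ^ 2 * (Nat.factorial (b - 1)) ^ 2 :=
            mul_lt_mul_of_pos_left hIH (pow_pos (by omega : 0 < b) 2)
        _ = (Nat.factorial b) ^ 2 := by
            rw [← mul_pow]
            congr 1
            rw [← Nat.succ_pred_eq_of_pos (by omega : 0 < b)]
            simp [Nat.factorial_succ]

/-- For positive integers `n`, `i` with `i + 1 < n - i - 1`, one has
`((n-i)(i+1))^(n-2i-2) < ((n-i-1)!/(i+1)!)^2`. -/
theorem stmt7 (n i : ℕ) (hi : 1 ≤ i) (h : i + 1 < n - i - 1) :
    (((n - i) * (i + 1) : ℝ)) ^ (n - 2 * i - 2) <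
      ((Nat.factorial (n - i - 1) : ℝ) / (Nat.factorial (i + 1))) ^ 2 := by
  set a := i + 1 with ha
  set b := n - i - 1 with hb
  have hab : a < b := h
  have hn : n ≥ 2 * i + 3 := by omega
  have key' := key b a hab
  have e1 : n - 2 * i - 2 = b - a := by omega
  have e2 : ((n : ℝ) - i) = (((b + 1 : ℕ)) : ℝ) := by
    have : n = b + 1 + i := by omega
    rw [this]; push_cast; ring
  have e3 : ((i : ℝ) + 1) = ((a : ℕ) : ℝ) := by push_cast [ha]; ring
  rw [e1, e2, e3, div_pow, lt_div_iff₀ (by positivity)]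
  exact_mod_cast key'
end

section
/- For any λ > 0 and 1 ≤ i < j ≤ n, the indirect influence of vertex i in the linear graph L_n strictly exceeds that of vertex j: F_i(λ) > F_j(λ), where (e^λ − 1) F_i(λ) = Σ_{m=1}^{n−i} λ^m/m! for i < n and F_n(λ) = 0. Hence the ordering by indirect influence on the vertices of L_n is 1 > 2 > ⋯ > n for every λ > 0. -/
/-- Indirect influence of vertex `i` in the linear graph `L_n` under the PWP method:
`F_i(λ) = (1/(e^λ - 1)) Σ_{m=1}^{n-i} λ^m/m!` (so `F_n = 0`). -/
noncomputable def inflL (n i : ℕ) (lam : ℝ) : ℝ :=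
  (1 / (Real.exp lam - 1)) * ∑ m ∈ Finset.Icc 1 (n - i), lam ^ m / (Nat.factorial m)

/-- For every `λ > 0` and `1 ≤ i < j ≤ n`, `F_i(λ) > F_j(λ)`: the ordering of the
vertices of `L_n` by indirect influence is `1 > 2 > ⋯ > n`. -/
theorem stmt10 (n i j : ℕ) (hn : 2 ≤ n) (hi : 1 ≤ i) (hij : i < j) (hjn : j ≤ n)
    (lam : ℝ) (hlam : 0 < lam) :
    inflL n i lam > inflL n j lam := by
  unfold inflL
  have hexp : (0:ℝ) < 1 / (Real.exp lam - 1) := by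
    have h1 : (1:ℝ) < Real.exp lam := by
      simpa using Real.exp_lt_exp.mpr hlam
    have := sub_pos.mpr h1
    positivity
  apply mul_lt_mul_of_pos_left _ hexp
  apply Finset.sum_lt_sum_of_subset
  · apply Finset.Icc_subset_Icc_right
    omega
  · exact Finset.mem_Icc.mpr ⟨by omega, le_rfl⟩
  · exact by simp [Finset.mem_Icc]; omega
  · positivity
  · intro k _ _
    positivity
end

section
/- For the directed n-cycle on ℤ_n, define T_k(λ) = (1/(e^λ − 1)) Σ_{l=0}^∞ λ^{k+ln}/(k+ln)! for k ∈ {1,...,n}. Then for every λ ∈ (0, 2), T_1(λ) > T_2(λ) > ⋯ > T_n(λ). -/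
/-- Indirect influence along distance k in the n-cycle under the PWP method. -/
noncomputable def Tcyc (n k : ℕ) (lam : ℝ) : ℝ :=
  (1 / (Real.exp lam - 1)) * ∑' l : ℕ, lam ^ (k + l * n) / (Nat.factorial (k + l * n))

/-- For every λ ∈ (0,2), the indirect influences in the n-cycle satisfy
`T_1(λ) > T_2(λ) > ⋯ > T_n(λ)`. -/
theorem stmt13 (n : ℕ) (hn : 2 ≤ n) (lam : ℝ) (h0 : 0 < lam) (h2 : lam < 2)
    (k : ℕ) (hk1 : 1 ≤ k) (hkn : k ≤ n - 1) :
    Tcyc n k lam > Tcyc n (k + 1) lam := by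
  have hfs : Summable (fun m : ℕ => lam ^ m / (m.factorial : ℝ)) :=
    Real.summable_pow_div_factorial lam
  have hinj : ∀ c : ℕ, Function.Injective (fun l : ℕ => c + l * n) := by
    intro c a b h
    simp only at h
    have hn0 : 0 < n := by omega
    have : a * n = b * n := by omega
    exact Nat.eq_of_mul_eq_mul_right hn0 this
  have hs1 : Summable (fun l : ℕ => lam ^ (k + l * n) / ((k + l * n).factorial : ℝ)) :=
    hfs.comp_injective (hinj k)
  have hs2 : Summable (fun l : ℕ => lam ^ (k + 1 + l * n) / ((k + 1 + l * n).factorial : ℝ)) :=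
    hfs.comp_injective (hinj (k + 1))
  have hlt : ∀ l : ℕ, lam ^ (k + 1 + l * n) / ((k + 1 + l * n).factorial : ℝ)
      < lam ^ (k + l * n) / ((k + l * n).factorial : ℝ) := by
    intro l
    set m := k + l * n with hm
    have hmk : k + 1 + l * n = m + 1 := by omega
    rw [hmk]
    have hfac : ((m + 1).factorial : ℝ) = (m.factorial : ℝ) * (m + 1) := by
      rw [Nat.factorial_succ]; push_cast; ring
    have hfacpos : (0 : ℝ) < (m.factorial : ℝ) := by positivity
    have hm1 : (2 : ℝ) ≤ (m : ℝ) + 1 := by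
      have : 1 ≤ m := by omega
      have : (1 : ℝ) ≤ (m : ℝ) := by exact_mod_cast this
      linarith
    rw [pow_succ, hfac]
    rw [div_lt_div_iff₀ (by positivity) hfacpos]
    have hpow : (0 : ℝ) < lam ^ m := pow_pos h0 m
    have h1 : lam * (m.factorial : ℝ) < (m.factorial : ℝ) * ((m : ℝ) + 1) := by nlinarith
    calc lam ^ m * lam * (m.factorial : ℝ) = lam ^ m * (lam * (m.factorial : ℝ)) := by ring
      _ < lam ^ m * ((m.factorial : ℝ) * ((m : ℝ) + 1)) := mul_lt_mul_of_pos_left h1 hpow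
  have htsum : (∑' l : ℕ, lam ^ (k + 1 + l * n) / ((k + 1 + l * n).factorial : ℝ))
      < ∑' l : ℕ, lam ^ (k + l * n) / ((k + l * n).factorial : ℝ) :=
    Summable.tsum_lt_tsum (fun l => (hlt l).le) (hlt 0) hs2 hs1
  have hc : (0 : ℝ) < 1 / (Real.exp lam - 1) := by
    have : (1 : ℝ) < Real.exp lam := by rw [← Real.exp_zero]; exact Real.exp_lt_exp.mpr h0
    have hgt : (0 : ℝ) < Real.exp lam - 1 := by linarith
    positivity
  unfold Tcyc
  exact mul_lt_mul_of_pos_left htsum hc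
end

section
/- The sequence of crossing points c_{i,i+1} = ((n−i)!/i!)^{1/(n−2i)} is strictly increasing in i: for n = 2k or n = 2k−1 and 1 ≤ i ≤ k−2, c_{i,i+1} < c_{i+1,i+2}; hence c_{1,2} < c_{2,3} < ⋯ < c_{k−1,k}. -/
lemma fact_prod_aux (i s : ℕ) :
    Nat.factorial (i + s) = Nat.factorial i * ∏ t ∈ Finset.range s, (i + 1 + t) := by
  induction s with
  | zero => simp
  | succ s ih =>
    rw [Finset.prod_range_succ, ← mul_assoc, ← ih,
      show i + (s + 1) = (i + s) + 1 from rfl, Nat.factorial_succ]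
    ring

lemma key_ineq_aux (i s : ℕ) (hs : 3 ≤ s) :
    ((i + 1) * (i + s)) ^ s < (∏ t ∈ Finset.range s, (i + 1 + t)) ^ 2 := by
  have hrefl : ∏ t ∈ Finset.range s, (i + 1 + t)
      = ∏ t ∈ Finset.range s, (i + s - t) := by
    rw [← Finset.prod_range_reflect]
    apply Finset.prod_congr rfl
    intro t ht
    simp only [Finset.mem_range] at ht
    omega
  have h2 : (∏ t ∈ Finset.range s, (i + 1 + t)) ^ 2
      = ∏ t ∈ Finset.range s, ((i + 1 + t) * (i + s - t)) := by
    rw [sq]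
    nth_rewrite 2 [hrefl]
    rw [Finset.prod_mul_distrib]
  have h1 : ((i + 1) * (i + s)) ^ s
      = ∏ _t ∈ Finset.range s, ((i + 1) * (i + s)) := by
    rw [Finset.prod_const, Finset.card_range]
  rw [h1, h2]
  apply Finset.prod_lt_prod
  · intro t _; positivity
  · intro t ht
    simp only [Finset.mem_range] at ht
    obtain ⟨v, hv⟩ : ∃ v, s = t + v + 1 := ⟨s - t - 1, by omega⟩
    have h3 : i + s - t = i + v + 1 := by omega
    rw [h3]
    nlinarith [hv, Nat.zero_le (t * v)]
  · refine ⟨1, Finset.mem_range.mpr (by omega), ?_⟩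
    have h4 : i + s - 1 = i + (s - 1) := by omega
    obtain ⟨v, hv⟩ : ∃ v, s = v + 3 := ⟨s - 3, by omega⟩
    subst hv
    have h5 : i + (v + 3) - 1 = i + v + 2 := by omega
    rw [h5]
    nlinarith

/-- The crossing points `c_{i,i+1} = ((n-i)!/i!)^(1/(n-2i))` are strictly increasing in `i`:
for `n = 2k` or `n = 2k-1` and `1 ≤ i ≤ k-2`, `c_{i,i+1} < c_{i+1,i+2}`. -/
theorem stmt19 (n k i : ℕ) (hk : 3 ≤ k) (hn : n = 2 * k ∨ n = 2 * k - 1)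
    (hi : 1 ≤ i) (hik : i ≤ k - 2) :
    ((Nat.factorial (n - i) : ℝ) / (Nat.factorial i)) ^ ((1 : ℝ) / (n - 2 * i : ℕ)) <
      ((Nat.factorial (n - (i + 1)) : ℝ) / (Nat.factorial (i + 1)))
        ^ ((1 : ℝ) / (n - 2 * (i + 1) : ℕ)) := by
  have hs3 : 3 ≤ n - 2 * i := by omega
  set s := n - 2 * i with hsdef
  obtain ⟨w, hw⟩ : ∃ w, s = w + 2 := ⟨s - 2, by omega⟩
  have hw1 : 1 ≤ w := by omega
  have hni : n - i = i + s := by omega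
  have hni1 : n - (i + 1) = (i + 1) + w := by omega
  have hs2 : n - 2 * (i + 1) = w := by omega
  set F : ℕ := ∏ t ∈ Finset.range s, (i + 1 + t) with hF
  set G : ℕ := ∏ t ∈ Finset.range w, (i + 2 + t) with hG
  have hFpos : 0 < F := Finset.prod_pos (fun t _ => by positivity)
  have hGpos : 0 < G := Finset.prod_pos (fun t _ => by positivity)
  have hFfact : Nat.factorial (n - i) = Nat.factorial i * F := by
    rw [hni]; exact fact_prod_aux i s
  have hGfact : Nat.factorial (n - (i + 1)) = Nat.factorial (i + 1) * G := by
    rw [hni1, fact_prod_aux (i + 1) w, hG]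
  -- F = G * ((i+1)*(i+s))
  have hFG : F = G * ((i + 1) * (i + s)) := by
    rw [hF, hG, hw, Finset.prod_range_succ', Finset.prod_range_succ]
    have e1 : ∀ t, i + 1 + (t + 1) = i + 2 + t := fun t => by omega
    simp only [e1]
    ring
  -- key nat inequality
  have hkey : ((i + 1) * (i + s)) ^ s < F ^ 2 := key_ineq_aux i s hs3
  have hP : 0 < ((i + 1) * (i + s)) ^ s := by positivity
  have hnat : F ^ w < G ^ s := by
    have h1 : F ^ w * ((i + 1) * (i + s)) ^ s < G ^ s * ((i + 1) * (i + s)) ^ s := by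
      calc F ^ w * ((i + 1) * (i + s)) ^ s
          < F ^ w * F ^ 2 := mul_lt_mul_of_pos_left hkey (pow_pos hFpos w)
        _ = F ^ s := by rw [← pow_add, ← hw]
        _ = G ^ s * ((i + 1) * (i + s)) ^ s := by rw [← mul_pow, ← hFG]
    exact lt_of_mul_lt_mul_right h1 (le_of_lt hP)
  -- pass to reals
  have e1 : ((Nat.factorial (n - i) : ℝ)) / (Nat.factorial i) = (F : ℝ) := by
    rw [hFfact]; push_cast
    rw [mul_comm, mul_div_assoc, div_self (by positivity), mul_one]
  have e2 : ((Nat.factorial (n - (i + 1)) : ℝ)) / (Nat.factorial (i + 1)) = (G : ℝ) := by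
    rw [hGfact]; push_cast
    rw [mul_comm, mul_div_assoc, div_self (by positivity), mul_one]
  rw [e1, e2, hs2]
  have hFpos' : (0 : ℝ) < F := by exact_mod_cast hFpos
  have hGpos' : (0 : ℝ) < G := by exact_mod_cast hGpos
  have hsne : (s : ℝ) ≠ 0 := Nat.cast_ne_zero.mpr (by omega)
  have hwne : (w : ℝ) ≠ 0 := Nat.cast_ne_zero.mpr (by omega)
  have hA : ((F : ℝ) ^ ((1 : ℝ) / (s : ℕ))) ^ (s * w) = (F : ℝ) ^ w := by
    rw [← Real.rpow_natCast ((F : ℝ) ^ ((1 : ℝ) / (s : ℕ))) (s * w),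
      ← Real.rpow_mul hFpos'.le,
      show (1 : ℝ) / (s : ℕ) * ((s * w : ℕ) : ℝ) = ((w : ℕ) : ℝ) by
        push_cast; field_simp,
      Real.rpow_natCast]
  have hB : ((G : ℝ) ^ ((1 : ℝ) / (w : ℕ))) ^ (s * w) = (G : ℝ) ^ s := by
    rw [← Real.rpow_natCast ((G : ℝ) ^ ((1 : ℝ) / (w : ℕ))) (s * w),
      ← Real.rpow_mul hGpos'.le,
      show (1 : ℝ) / (w : ℕ) * ((s * w : ℕ) : ℝ) = ((s : ℕ) : ℝ) by
        push_cast; field_simp,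
      Real.rpow_natCast]
  apply lt_of_pow_lt_pow_left₀ (s * w) (by positivity)
  rw [hA, hB]
  exact_mod_cast hnat
end
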